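/- Fix coprime integers 1 ≤ k < m, and let r₀ ∈ (0,1) be the unique positive root of 1 − x^k − x^m = 0. Then the rescaled population sequence converges: lim_{n→∞} a_n · r₀^n = (1 − r₀^k) / ((1 − r₀)(m·r₀^m + k·r₀^k)). In particular, a_n ∼ (1 − r₀^k)/((1 − r₀)(m r₀^m + k r₀^k)) · r₀^{−n} as n → ∞. -/

import Mathlib

open Filter Finset

namespace PopAsym

noncomputable def wmin (b : ℕ → ℝ) (m : ℕ) (hm : 0 < m) (n : ℕ) : ℝ :=
  (Finset.range m).inf' (Finset.nonempty_range_iff.mpr hm.ne') fun i => b (n + i)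

noncomputable def wmax (b : ℕ → ℝ) (m : ℕ) (hm : 0 < m) (n : ℕ) : ℝ :=
  (Finset.range m).sup' (Finset.nonempty_range_iff.mpr hm.ne') fun i => b (n + i)

variable {b : ℕ → ℝ} {m k : ℕ} {p q : ℝ}

lemma wmin_le (hm : 0 < m) (n : ℕ) {i : ℕ} (hi : i < m) : wmin b m hm n ≤ b (n + i) :=
  Finset.inf'_le _ (Finset.mem_range.mpr hi)

lemma le_wmax (hm : 0 < m) (n : ℕ) {i : ℕ} (hi : i < m) : b (n + i) ≤ wmax b m hm n :=
  Finset.le_sup' (fun j => b (n + j)) (Finset.mem_range.mpr hi)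

lemma wmin_le_wmax (hm : 0 < m) (n : ℕ) : wmin b m hm n ≤ wmax b m hm n :=
  le_trans (wmin_le hm n hm) (le_wmax hm n hm)

lemma rep (hcop : Nat.gcd k m = 1) (hm1 : 1 < m) {d : ℕ} (hd : k * m ≤ d) (hk : 1 ≤ k) :
    ∃ i j, i ≤ m ∧ j ≤ d ∧ d = i * k + j * m := by
  obtain ⟨u, -, hu⟩ := Nat.exists_mul_mod_eq_one_of_coprime hcop hm1
  set i := d * u % m with hi
  have him : i < m := Nat.mod_lt _ (by omega)
  have hik : i * k ≤ d := by
    have h1 : i * k ≤ (m - 1) * k := Nat.mul_le_mul_right k (by omega)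
    have h2 : (m - 1) * k = m * k - k := by rw [Nat.sub_mul, Nat.one_mul]
    have h3 : m * k = k * m := Nat.mul_comm m k
    omega
  have hmod : i * k ≡ d [MOD m] := by
    calc i * k ≡ d * u * k [MOD m] := (Nat.mod_modEq (d * u) m).mul_right k
      _ = d * (k * u) := by ring
      _ ≡ d * (k * u % m) [MOD m] := (Nat.ModEq.mul_left d (Nat.mod_modEq (k * u) m)).symm
      _ = d := by rw [hu, Nat.mul_one]
  have hdvd : m ∣ d - i * k := (Nat.modEq_iff_dvd' hik).mp hmod
  refine ⟨i, (d - i * k) / m, him.le, ?_, ?_⟩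
  · have h1 : (d - i * k) / m * m = d - i * k := Nat.div_mul_cancel hdvd
    have := Nat.div_le_self (d - i * k) m
    omega
  · have h1 : (d - i * k) / m * m = d - i * k := Nat.div_mul_cancel hdvd
    omega

section rec

variable (hm : 0 < m) (hk : 1 ≤ k) (hkm : k < m) (hp : 0 < p) (hq : 0 < q) (hpq : p + q = 1)
  (hrec : ∀ n, b (n + m) = p * b (n + (m - k)) + q * b n)

include hk hkm hp hq hpq hrec

lemma bound_step (n : ℕ) :
    wmin b m hm n ≤ b (n + m) ∧ b (n + m) ≤ wmax b m hm n := by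
  have h := hrec n
  have h1 := wmin_le (b := b) hm n (i := m - k) (by omega)
  have h2 := wmin_le (b := b) hm n (i := 0) hm
  have h3 := le_wmax (b := b) hm n (i := m - k) (by omega)
  have h4 := le_wmax (b := b) hm n (i := 0) hm
  simp only [Nat.add_zero] at h2 h4
  have e1 : p * wmin b m hm n + q * wmin b m hm n = wmin b m hm n := by
    rw [← add_mul, hpq, one_mul]
  have e2 : p * wmax b m hm n + q * wmax b m hm n = wmax b m hm n := by
    rw [← add_mul, hpq, one_mul]
  constructor <;>
    nlinarith [mul_le_mul_of_nonneg_left h1 hp.le, mul_le_mul_of_nonneg_left h2 hq.le,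
      mul_le_mul_of_nonneg_left h3 hp.le, mul_le_mul_of_nonneg_left h4 hq.le]

lemma wmin_mono : Monotone (wmin b m hm) := by
  apply monotone_nat_of_le_succ
  intro n
  apply Finset.le_inf'
  intro i hi
  have he : n + 1 + i = n + (i + 1) := by omega
  rw [he]
  rcases Nat.lt_or_ge (i + 1) m with h | h
  · exact wmin_le (b := b) hm n (i := i + 1) h
  · have him : i + 1 = m := by simp only [Finset.mem_range] at hi; omega
    rw [him]
    exact (bound_step hm hk hkm hp hq hpq hrec n).1

lemma wmax_anti : Antitone (wmax b m hm) := by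
  apply antitone_nat_of_succ_le
  intro n
  apply Finset.sup'_le
  intro i hi
  have he : n + 1 + i = n + (i + 1) := by omega
  rw [he]
  rcases Nat.lt_or_ge (i + 1) m with h | h
  · exact le_wmax (b := b) hm n (i := i + 1) h
  · have him : i + 1 = m := by simp only [Finset.mem_range] at hi; omega
    rw [him]
    exact (bound_step hm hk hkm hp hq hpq hrec n).2

lemma wmin_le_all (n : ℕ) : ∀ d, wmin b m hm n ≤ b (n + d) := by
  intro d
  induction d using Nat.strong_induction_on with
  | _ d ih =>
    rcases Nat.lt_or_ge d m with h | h
    · exact wmin_le hm n h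
    · have hd : n + d = (n + (d - m)) + m := by omega
      rw [hd, hrec]
      have i1 := ih (d - m + (m - k)) (by omega)
      have i2 := ih (d - m) (by omega)
      rw [← Nat.add_assoc] at i1
      have e1 : p * wmin b m hm n + q * wmin b m hm n = wmin b m hm n := by
        rw [← add_mul, hpq, one_mul]
      nlinarith [mul_le_mul_of_nonneg_left i1 hp.le, mul_le_mul_of_nonneg_left i2 hq.le]

lemma step_k (n t : ℕ) (ht : n + m ≤ t) :
    p * b t + q * wmin b m hm n ≤ b (t + k) := by
  have h := hrec (t + k - m)
  have e1 : t + k - m + m = t + k := by omega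
  have e2 : t + k - m + (m - k) = t := by omega
  rw [e1, e2] at h
  have e3 : t + k - m = n + (t + k - m - n) := by omega
  have i2 : wmin b m hm n ≤ b (t + k - m) := by
    rw [e3]; exact wmin_le_all hm hk hkm hp hq hpq hrec n _
  rw [h]
  nlinarith [mul_le_mul_of_nonneg_left i2 hq.le]

lemma step_m (n t : ℕ) (ht : n + m ≤ t) :
    q * b t + p * wmin b m hm n ≤ b (t + m) := by
  have h := hrec t
  have e3 : t + (m - k) = n + (t + (m - k) - n) := by omega
  have i2 : wmin b m hm n ≤ b (t + (m - k)) := by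
    rw [e3]; exact wmin_le_all hm hk hkm hp hq hpq hrec n _
  rw [h]
  nlinarith [mul_le_mul_of_nonneg_left i2 hp.le]

lemma weight (n : ℕ) : ∀ i j t, n + m ≤ t →
    p ^ i * q ^ j * b t + (1 - p ^ i * q ^ j) * wmin b m hm n ≤ b (t + (i * k + j * m)) := by
  intro i
  induction i with
  | zero =>
    intro j
    induction j with
    | zero => intro t ht; simp
    | succ j ihj =>
      intro t ht
      have hX : t + (0 * k + (j + 1) * m) = (t + m) + (0 * k + j * m) := by ring
      rw [hX]
      have IH := ihj (t + m) (by omega)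
      have S := step_m hm hk hkm hp hq hpq hrec n t ht
      have hc : (0:ℝ) ≤ p ^ 0 * q ^ j := by positivity
      have key : p ^ 0 * q ^ (j + 1) * b t + (1 - p ^ 0 * q ^ (j + 1)) * wmin b m hm n
          = p ^ 0 * q ^ j * (q * b t + p * wmin b m hm n)
            + (1 - p ^ 0 * q ^ j) * wmin b m hm n := by
        have hp' : p = 1 - q := by linarith
        rw [hp']; ring
      rw [key]
      have := mul_le_mul_of_nonneg_left S hc
      linarith
  | succ i ihi =>
    intro j t ht
    have hX : t + ((i + 1) * k + j * m) = (t + k) + (i * k + j * m) := by ring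
    rw [hX]
    have IH := ihi j (t + k) (by omega)
    have S := step_k hm hk hkm hp hq hpq hrec n t ht
    have hc : (0:ℝ) ≤ p ^ i * q ^ j := by positivity
    have key : p ^ (i + 1) * q ^ j * b t + (1 - p ^ (i + 1) * q ^ j) * wmin b m hm n
        = p ^ i * q ^ j * (p * b t + q * wmin b m hm n)
          + (1 - p ^ i * q ^ j) * wmin b m hm n := by
      have hq' : q = 1 - p := by linarith
      rw [hq']; ring
    rw [key]
    have := mul_le_mul_of_nonneg_left S hc
    linarith

lemma contraction (hcop : Nat.gcd k m = 1) (hp1 : p ≤ 1) (hq1 : q ≤ 1) (n : ℕ) :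
    p ^ m * q ^ (k * m + 2 * m) * wmax b m hm (n + m)
      + (1 - p ^ m * q ^ (k * m + 2 * m)) * wmin b m hm n
      ≤ wmin b m hm (n + (k * m + 2 * m)) := by
  obtain ⟨i₀, hi₀mem, hmax⟩ := Finset.exists_mem_eq_sup'
    (Finset.nonempty_range_iff.mpr hm.ne') (fun i => b (n + m + i))
  have hi₀ : i₀ < m := Finset.mem_range.mp hi₀mem
  have hmax' : wmax b m hm (n + m) = b (n + m + i₀) := hmax
  apply Finset.le_inf'
  intro i himem
  have hi : i < m := Finset.mem_range.mp himem
  have hd1 : k * m ≤ (n + (k * m + 2 * m) + i) - (n + m + i₀) := by omega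
  obtain ⟨i', j', hi', hj', hrep⟩ := rep hcop (by omega) hd1 hk
  have hts : (n + m + i₀) + ((n + (k * m + 2 * m) + i) - (n + m + i₀))
      = n + (k * m + 2 * m) + i := by omega
  have key := weight hm hk hkm hp hq hpq hrec n i' j' (n + m + i₀) (by omega)
  rw [← hrep, hts] at key
  have hw1 : p ^ m ≤ p ^ i' := pow_le_pow_of_le_one hp.le hp1 hi'
  have hw2 : q ^ (k * m + 2 * m) ≤ q ^ j' :=
    pow_le_pow_of_le_one hq.le hq1 (hj'.trans (by omega))
  have hδw : p ^ m * q ^ (k * m + 2 * m) ≤ p ^ i' * q ^ j' :=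
    mul_le_mul hw1 hw2 (by positivity) (by positivity)
  have hbt : wmin b m hm n ≤ b (n + m + i₀) :=
    le_trans (wmin_mono hm hk hkm hp hq hpq hrec (Nat.le_add_right n m))
      (wmin_le hm (n + m) hi₀)
  rw [hmax']
  nlinarith [mul_nonneg (sub_nonneg.mpr hδw) (sub_nonneg.mpr hbt)]

lemma osc_contract (hcop : Nat.gcd k m = 1) (hp1 : p ≤ 1) (hq1 : q ≤ 1) (n : ℕ) :
    wmax b m hm (n + (k * m + 2 * m)) - wmin b m hm (n + (k * m + 2 * m))
      ≤ (1 - p ^ m * q ^ (k * m + 2 * m)) * (wmax b m hm n - wmin b m hm n) := by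
  have h1 := contraction hm hk hkm hp hq hpq hrec hcop hp1 hq1 n
  have h2 : wmax b m hm (n + (k * m + 2 * m)) ≤ wmax b m hm (n + m) :=
    wmax_anti hm hk hkm hp hq hpq hrec (by omega)
  have h3 : wmax b m hm (n + m) ≤ wmax b m hm n :=
    wmax_anti hm hk hkm hp hq hpq hrec (by omega)
  have h4 : wmin b m hm n ≤ wmax b m hm (n + m) :=
    le_trans (wmin_mono hm hk hkm hp hq hpq hrec (by omega)) (wmin_le_wmax hm (n + m))
  have hδ1 : p ^ m * q ^ (k * m + 2 * m) ≤ 1 :=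
    mul_le_one₀ (pow_le_one₀ hp.le hp1) (by positivity) (pow_le_one₀ hq.le hq1)
  nlinarith [mul_nonneg (sub_nonneg.mpr hδ1) (sub_nonneg.mpr h4)]

lemma osc_tendsto (hcop : Nat.gcd k m = 1) (hp1 : p ≤ 1) (hq1 : q ≤ 1) :
    Tendsto (fun n => wmax b m hm n - wmin b m hm n) atTop (nhds 0) := by
  set E := k * m + 2 * m with hE
  set c := 1 - p ^ m * q ^ E with hc
  have hδpos : 0 < p ^ m * q ^ E := by positivity
  have hδ1 : p ^ m * q ^ E ≤ 1 :=
    mul_le_one₀ (pow_le_one₀ hp.le hp1) (by positivity) (pow_le_one₀ hq.le hq1)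
  have hc0 : 0 ≤ c := by simp only [hc]; linarith
  have hc1 : c < 1 := by simp only [hc]; linarith
  have hosc_anti : Antitone (fun n => wmax b m hm n - wmin b m hm n) := fun a b hab => by
    have := wmax_anti hm hk hkm hp hq hpq hrec hab
    have := wmin_mono hm hk hkm hp hq hpq hrec hab
    simp only
    linarith
  have hosc_nonneg : ∀ n, 0 ≤ wmax b m hm n - wmin b m hm n := fun n =>
    sub_nonneg.mpr (wmin_le_wmax hm n)
  have hgeo : ∀ j : ℕ, wmax b m hm (j * E) - wmin b m hm (j * E)
      ≤ c ^ j * (wmax b m hm 0 - wmin b m hm 0) := by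
    intro j
    induction j with
    | zero => simp
    | succ j ih =>
      have h1 := osc_contract hm hk hkm hp hq hpq hrec hcop hp1 hq1 (j * E)
      have he : (j + 1) * E = j * E + E := by ring
      rw [he]
      calc wmax b m hm (j * E + E) - wmin b m hm (j * E + E)
          ≤ c * (wmax b m hm (j * E) - wmin b m hm (j * E)) := h1
        _ ≤ c * (c ^ j * (wmax b m hm 0 - wmin b m hm 0)) :=
            mul_le_mul_of_nonneg_left ih hc0
        _ = c ^ (j + 1) * (wmax b m hm 0 - wmin b m hm 0) := by ring
  rw [Metric.tendsto_atTop]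
  intro ε hε
  have htend : Tendsto (fun j : ℕ => c ^ j * (wmax b m hm 0 - wmin b m hm 0)) atTop (nhds 0) := by
    have := (tendsto_pow_atTop_nhds_zero_of_lt_one hc0 hc1).mul_const
      (wmax b m hm 0 - wmin b m hm 0)
    simpa using this
  obtain ⟨j, hj⟩ := (htend.eventually_lt_const hε).exists
  refine ⟨j * E, fun n hn => ?_⟩
  have h1 : wmax b m hm n - wmin b m hm n ≤ wmax b m hm (j * E) - wmin b m hm (j * E) :=
    hosc_anti hn
  have h2 := hgeo j
  have h3 := hosc_nonneg n
  rw [Real.dist_eq]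
  rw [abs_sub_lt_iff]
  constructor <;> linarith

lemma b_tendsto (hcop : Nat.gcd k m = 1) (hp1 : p ≤ 1) (hq1 : q ≤ 1) :
    Tendsto b atTop (nhds (⨆ n, wmin b m hm n)) := by
  have hbdd : BddAbove (Set.range (wmin b m hm)) := by
    refine ⟨wmax b m hm 0, ?_⟩
    rintro x ⟨n, rfl⟩
    exact le_trans (wmin_le_wmax hm n)
      (wmax_anti hm hk hkm hp hq hpq hrec (Nat.zero_le n))
  have h1 : Tendsto (wmin b m hm) atTop (nhds (⨆ n, wmin b m hm n)) :=
    tendsto_atTop_ciSup (wmin_mono hm hk hkm hp hq hpq hrec) hbdd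
  have h2 : Tendsto (wmax b m hm) atTop (nhds (⨆ n, wmin b m hm n)) := by
    have := h1.add (osc_tendsto hm hk hkm hp hq hpq hrec hcop hp1 hq1)
    simp only [add_zero] at this
    convert this using 2 with n
    ring
  refine tendsto_of_tendsto_of_tendsto_of_le_of_le h1 h2 (fun n => ?_) (fun n => ?_)
  · simpa using wmin_le (b := b) hm n (i := 0) hm
  · simpa using le_wmax (b := b) hm n (i := 0) hm

end rec


end PopAsym
theorem population_asymptotics (k m : ℕ) (hk : 1 ≤ k) (hkm : k < m)
    (hcop : Nat.gcd k m = 1) (a : ℕ → ℝ)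
    (ha0 : ∀ n < m, a n = 1)
    (harec : ∀ n ≥ m, a n = a (n - k) + a (n - m))
    (r₀ : ℝ) (hr0 : 0 < r₀) (hr1 : r₀ < 1) (hroot : r₀ ^ k + r₀ ^ m = 1) :
    Tendsto (fun n : ℕ => a n * r₀ ^ n) atTop
      (nhds ((1 - r₀ ^ k) / ((1 - r₀) * (m * r₀ ^ m + k * r₀ ^ k)))) := by
  have hm : 0 < m := by omega
  set p := r₀ ^ k with hp_def
  set q := r₀ ^ m with hq_def
  have hp : 0 < p := by positivity
  have hq : 0 < q := by positivity
  have hpq : p + q = 1 := hroot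
  have hp1 : p ≤ 1 := by linarith
  have hq1 : q ≤ 1 := by linarith
  set b : ℕ → ℝ := fun n => a n * r₀ ^ n with hb_def
  have hb0 : ∀ n, n < m → b n = r₀ ^ n := by
    intro n hn
    simp [hb_def, ha0 n hn]
  have hrec : ∀ n, b (n + m) = p * b (n + (m - k)) + q * b n := by
    intro n
    have h := harec (n + m) (by omega)
    have e1 : n + m - k = n + (m - k) := by omega
    have e2 : n + m - m = n := by omega
    rw [e1, e2] at h
    simp only [hb_def]
    rw [h]
    have e3 : r₀ ^ (n + m) = r₀ ^ (n + (m - k)) * r₀ ^ k := by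
      rw [← pow_add]; congr 1; omega
    have e4 : r₀ ^ (n + m) = r₀ ^ n * r₀ ^ m := by rw [← pow_add]
    rw [hp_def, hq_def]
    linear_combination a (n + (m - k)) * e3 + a n * e4
  -- the limit
  set L := ⨆ n, PopAsym.wmin b m hm n with hL_def
  have hbL : Tendsto b atTop (nhds L) :=
    PopAsym.b_tendsto hm hk hkm hp hq hpq hrec hcop hp1 hq1
  -- invariant
  set S : ℕ → ℕ → ℝ := fun t l => ∑ i ∈ Finset.range l, b (t + i) with hS_def
  have hshift : ∀ t l, S (t + 1) l = S t l + b (t + l) - b t := by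
    intro t l
    have A : S t (l + 1) = S t l + b (t + l) := Finset.sum_range_succ _ _
    have B : S t (l + 1) = (∑ i ∈ Finset.range l, b (t + (i + 1))) + b (t + 0) :=
      Finset.sum_range_succ' _ _
    have C : (∑ i ∈ Finset.range l, b (t + (i + 1))) = S (t + 1) l := by
      apply Finset.sum_congr rfl
      intro i _
      congr 1
      omega
    rw [C] at B
    simp only [Nat.add_zero] at B
    linarith
  set T : ℕ → ℝ := fun n => p * S (n + (m - k)) k + q * S n m with hT_def
  have hTstep : ∀ n, T (n + 1) = T n := by
    intro n
    have e : n + 1 + (m - k) = n + (m - k) + 1 := by omega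
    have h1 : S (n + 1 + (m - k)) k = S (n + (m - k)) k + b (n + m) - b (n + (m - k)) := by
      rw [e, hshift]
      have e2 : n + (m - k) + k = n + m := by omega
      rw [e2]
    have h2 : S (n + 1) m = S n m + b (n + m) - b n := hshift n m
    have h3 := hrec n
    simp only [hT_def]
    rw [h1, h2]
    linear_combination b (n + m) * hpq + h3
  have hTconst : ∀ n, T n = T 0 := by
    intro n
    induction n with
    | zero => rfl
    | succ n ih => rw [hTstep n, ih]
  -- limit of T
  have hsumlim : ∀ c l : ℕ, Tendsto (fun n => S (n + c) l) atTop (nhds (l * L)) := by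
    intro c l
    have h1 : ∀ i : ℕ, Tendsto (fun n => b (n + c + i)) atTop (nhds L) := by
      intro i
      have h0 := hbL.comp (tendsto_add_atTop_nat (c + i))
      simp only [Function.comp_def] at h0
      have h2 : (fun n => b (n + c + i)) = fun n => b (n + (c + i)) := by
        funext n; congr 1; omega
      rw [h2]
      exact h0
    have := tendsto_finset_sum (Finset.range l) (fun i _ => h1 i)
    simpa [hS_def, Finset.sum_const, Finset.card_range, nsmul_eq_mul] using this
  have hTlim : Tendsto T atTop (nhds (p * (k * L) + q * (m * L))) := by
    apply Tendsto.add
    · exact (hsumlim (m - k) k).const_mul p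
    · have := (hsumlim 0 m).const_mul q
      simpa using this
  have hTlim2 : Tendsto T atTop (nhds (T 0)) := by
    have : T = fun _ => T 0 := funext hTconst
    rw [this]
    exact tendsto_const_nhds
  have heq : p * (k * L) + q * (m * L) = T 0 := tendsto_nhds_unique hTlim hTlim2
  -- compute T 0
  have hT0 : (1 - r₀) * T 0 = q := by
    have hS1 : S (0 + (m - k)) k = r₀ ^ (m - k) * ∑ i ∈ Finset.range k, r₀ ^ i := by
      simp only [hS_def, Finset.mul_sum]
      apply Finset.sum_congr rfl
      intro i hi
      have hi' : i < k := Finset.mem_range.mp hi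
      rw [hb0 (0 + (m - k) + i) (by omega), ← pow_add]
      congr 1
      omega
    have hS2 : S 0 m = ∑ i ∈ Finset.range m, r₀ ^ i := by
      apply Finset.sum_congr rfl
      intro i hi
      rw [hb0 (0 + i) (by simpa using Finset.mem_range.mp hi)]
      congr 1
      omega
    have hg1 : (∑ i ∈ Finset.range k, r₀ ^ i) * (r₀ - 1) = r₀ ^ k - 1 := geom_sum_mul r₀ k
    have hg2 : (∑ i ∈ Finset.range m, r₀ ^ i) * (r₀ - 1) = r₀ ^ m - 1 := geom_sum_mul r₀ m
    have hpm : p * r₀ ^ (m - k) = q := by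
      rw [hp_def, hq_def, ← pow_add]
      congr 1
      omega
    simp only [hT_def]
    rw [hS1, hS2]
    have expand : (1 - r₀) * (p * (r₀ ^ (m - k) * ∑ i ∈ Finset.range k, r₀ ^ i)
        + q * ∑ i ∈ Finset.range m, r₀ ^ i)
        = (p * r₀ ^ (m - k)) * (-((∑ i ∈ Finset.range k, r₀ ^ i) * (r₀ - 1)))
          + q * (-((∑ i ∈ Finset.range m, r₀ ^ i) * (r₀ - 1))) := by ring
    rw [expand, hg1, hg2, hpm, hq_def]
    linear_combination (-(r₀ ^ m)) * hroot
  -- identify L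
  have hden : (1 - r₀) * ((m : ℝ) * q + k * p) ≠ 0 := by
    have h1 : (0:ℝ) < 1 - r₀ := by linarith
    have h2 : (0:ℝ) < (m : ℝ) * q + k * p := by
      have : (1:ℝ) ≤ (m : ℝ) := by exact_mod_cast hm
      have : (0:ℝ) ≤ (k : ℝ) := by positivity
      nlinarith
    positivity
  have hLid : L = (1 - p) / ((1 - r₀) * ((m : ℝ) * q + k * p)) := by
    rw [eq_div_iff hden]
    linear_combination (1 - r₀) * heq + hT0 + hpq
  rw [← hLid]
  exact hbL
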